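/- The determinant of the d×d Hilbert matrix, with entries 1/(i+j+1) for 0 ≤ i,j ≤ d-1, is strictly positive. -/

import Mathlib

open Matrix

open MeasureTheory intervalIntegral in
lemma hilbert_quadform_pos (d : ℕ) (x : Fin d → ℝ) (hx : x ≠ 0) :
    0 < ∑ i : Fin d, ∑ j : Fin d, x i * x j / (i.val + j.val + 1) := by
  -- the quadratic form equals ∫ t in 0..1, (∑ i, x i * t^i)^2
  have key : (∫ t in (0:ℝ)..1, (∑ i : Fin d, x i * t ^ (i : ℕ)) ^ 2)
      = ∑ i : Fin d, ∑ j : Fin d, x i * x j / (i.val + j.val + 1) := by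
    have hexp : ∀ t : ℝ, (∑ i : Fin d, x i * t ^ (i : ℕ)) ^ 2
        = ∑ i : Fin d, ∑ j : Fin d, x i * x j * t ^ ((i : ℕ) + (j : ℕ)) := by
      intro t
      rw [sq, Finset.sum_mul_sum]
      refine Finset.sum_congr rfl fun i _ => Finset.sum_congr rfl fun j _ => ?_
      rw [pow_add]; ring
    simp only [hexp]
    rw [intervalIntegral.integral_finset_sum (fun i _ => ?_)]
    · refine Finset.sum_congr rfl fun i _ => ?_
      rw [intervalIntegral.integral_finset_sum (fun j _ => ?_)]
      · refine Finset.sum_congr rfl fun j _ => ?_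
        rw [intervalIntegral.integral_const_mul, integral_pow]
        push_cast
        simp [div_eq_mul_inv]
      · exact ((continuous_const.mul (continuous_pow _)).intervalIntegrable _ _)
    · exact (Continuous.intervalIntegrable (by continuity) _ _)
  rw [← key]
  -- the polynomial p
  set P : Polynomial ℝ := ∑ i : Fin d, Polynomial.C (x i) * Polynomial.X ^ (i : ℕ) with hP
  have hPeval : ∀ t : ℝ, P.eval t = ∑ i : Fin d, x i * t ^ (i : ℕ) := by
    intro t; simp [hP, Polynomial.eval_finset_sum]
  have hPne : P ≠ 0 := by
    intro h
    apply hx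
    funext i
    have : P.coeff (i : ℕ) = x i := by
      rw [hP]
      rw [Polynomial.finset_sum_coeff]
      rw [Finset.sum_eq_single i]
      · simp
      · intro j _ hji
        have hne : (i : ℕ) ≠ (j : ℕ) := fun h => hji (Fin.val_injective h).symm
        simp [Polynomial.coeff_C_mul, Polynomial.coeff_X_pow, hne]
      · simp
    rw [h] at this
    simpa using this.symm
  have hroots : Set.Finite {t : ℝ | P.IsRoot t} := Polynomial.finite_setOf_isRoot hPne
  have hf : (fun t : ℝ => (∑ i : Fin d, x i * t ^ (i : ℕ)) ^ 2) = fun t => (P.eval t) ^ 2 := by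
    funext t; rw [hPeval]
  rw [hf]
  rw [intervalIntegral.integral_pos_iff_support_of_nonneg_ae'
    (Filter.Eventually.of_forall fun t => sq_nonneg _)
    ((Continuous.intervalIntegrable (by continuity) _ _))]
  refine ⟨one_pos, ?_⟩
  have hsub : Set.Ioc (0:ℝ) 1 \ {t : ℝ | P.IsRoot t}
      ⊆ Function.support (fun t => (P.eval t) ^ 2) ∩ Set.Ioc 0 1 := by
    rintro t ⟨ht, hroot⟩
    exact ⟨pow_ne_zero _ (by simpa [Polynomial.IsRoot] using hroot), ht⟩
  calc (0:ENNReal) < volume (Set.Ioc (0:ℝ) 1 \ {t : ℝ | P.IsRoot t}) := by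
        rw [measure_diff_null (hroots.measure_zero _)]
        simp
    _ ≤ _ := measure_mono hsub

theorem hilbert_matrix_det_pos (d : ℕ) (hd : 1 ≤ d)
    (H : Matrix (Fin d) (Fin d) ℝ)
    (hH : ∀ i j : Fin d, H i j = 1 / (i.val + j.val + 1)) :
    0 < H.det := by
  have hpd : H.PosDef := by
    rw [Matrix.posDef_iff_dotProduct_mulVec]
    constructor
    · ext i j
      simp [hH, add_comm]
    · intro x hx
      have := hilbert_quadform_pos d x hx
      calc (0:ℝ) < ∑ i : Fin d, ∑ j : Fin d, x i * x j / (i.val + j.val + 1) := this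
        _ = dotProduct (star x) (H *ᵥ x) := by
            simp only [dotProduct, mulVec, star, hH]
            refine Finset.sum_congr rfl fun i _ => ?_
            rw [Finset.mul_sum]
            refine Finset.sum_congr rfl fun j _ => ?_
            simp [div_eq_mul_inv]
            ring
  exact hpd.det_pos
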